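/- Let n ≥ 3, let H = {0} ∪ {m ∈ ℕ : m ≥ n} (the numerical semigroup generated by n, n+1, …, 2n−1), let k be a field, and set R = k[[H]] with maximal ideal 𝔪_R = {g ∈ R : the constant coefficient of g is 0}. Then: (i) the conductor {r ∈ R : r·k[[t]] ⊆ R} equals 𝔪_R; (ii) tr(ω_H) = 𝔪_R, where tr(ω_H) = {∑ᵢ fᵢ(mᵢ) : fᵢ ∈ Hom_R(ω_H, R), mᵢ ∈ ω_H} ⊆ R; and (iii) b(ω_H) = 𝔪_R, where b(ω_H) = {r ∈ R : r·x ∈ R for every x ∈ k((t)) with x·ω_Hⁿ ⊆ ω_Hⁿ for some n}. -/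

import Mathlib

set_option synthInstance.maxHeartbeats 400000
set_option maxHeartbeats 1000000

/-- The Frobenius number of a numerical semigroup `H ⊆ ℕ`: the largest natural number
not in `H` (meaningful when `H ≠ ℕ` and the complement of `H` is finite). -/
noncomputable def frobeniusNumber (H : AddSubmonoid ℕ) : ℕ :=
  sSup {x : ℕ | x ∉ H}

/-- The set of quasi-Frobenius numbers of a numerical semigroup `H`:
`QF(H) = {x ∈ ℕ \ H : x + h ∈ H for every nonzero h ∈ H}`. -/
def QF (H : AddSubmonoid ℕ) : Set ℕ :=
  {x | x ∉ H ∧ ∀ h ∈ H, h ≠ 0 → x + h ∈ H}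

/-- The semigroup power series ring `k[[H]]`: the subalgebra of `k[[t]]` of power series
whose `i`-th coefficient vanishes for all `i ∉ H`. -/
noncomputable def semigroupAlgebra (k : Type*) [Field k] (H : AddSubmonoid ℕ) :
    Subalgebra k (PowerSeries k) where
  carrier := {g | ∀ i : ℕ, i ∉ H → PowerSeries.coeff i g = 0}
  mul_mem' := by
    intro a b ha hb i hi
    rw [PowerSeries.coeff_mul]
    refine Finset.sum_eq_zero ?_
    rintro ⟨p, q⟩ hpq
    replace hpq : p + q = i := Finset.HasAntidiagonal.mem_antidiagonal.mp hpq
    by_cases hp : p ∈ H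
    · by_cases hq : q ∈ H
      · exact absurd (hpq ▸ H.add_mem hp hq) hi
      · rw [hb q hq, mul_zero]
    · rw [ha p hp, zero_mul]
  one_mem' := by
    intro i hi
    have h0 : i ≠ 0 := fun h => hi (h ▸ H.zero_mem)
    rw [PowerSeries.coeff_one, if_neg h0]
  add_mem' := by
    intro a b ha hb i hi
    rw [map_add, ha i hi, hb i hi, add_zero]
  zero_mem' := by
    intro i hi
    rw [map_zero]
  algebraMap_mem' := by
    intro r i hi
    have h0 : i ≠ 0 := fun h => hi (h ▸ H.zero_mem)
    simp only [PowerSeries.algebraMap_apply, PowerSeries.coeff_C, if_neg h0]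

/-- The canonical module `ω_H` of `k[[H]]`: the `k[[H]]`-submodule of `k[[t]]`
generated by the monomials `t^(f(H) - x)` for `x ∈ QF(H)`. -/
noncomputable def canonicalModule (k : Type*) [Field k] (H : AddSubmonoid ℕ) :
    Submodule ↥(semigroupAlgebra k H) (PowerSeries k) :=
  Submodule.span ↥(semigroupAlgebra k H)
    ((fun x => (PowerSeries.X : PowerSeries k) ^ (frobeniusNumber H - x)) '' QF H)


/-- The trace ideal of a module: the ideal generated by all values `f m`
for `f : M →ₗ[R] R` and `m : M`. -/
def traceIdeal (R : Type*) [CommRing R] (M : Type*) [AddCommGroup M] [Module R M] :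
    Ideal R :=
  ⨆ f : M →ₗ[R] R, LinearMap.range f

/-- The numerical semigroup `H = {0} ∪ {m ∈ ℕ : m ≥ n}`, i.e. the semigroup generated
by `n, n+1, …, 2n-1`. -/
def nSemigroup (n : ℕ) : AddSubmonoid ℕ where
  carrier := {m : ℕ | m = 0 ∨ n ≤ m}
  zero_mem' := Or.inl rfl
  add_mem' := by
    rintro a b (ha | ha) (hb | hb) <;> [left; right; right; right] <;> omega

/-- The ideal `𝔪_R = {g ∈ k[[H]] : the constant coefficient of g is 0}` of `k[[H]]`. -/
noncomputable def maximalIdealOf (k : Type*) [Field k] (H : AddSubmonoid ℕ) :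
    Ideal ↥(semigroupAlgebra k H) where
  carrier := {g | PowerSeries.constantCoeff (g : PowerSeries k) = 0}
  add_mem' := by
    intro a b ha hb
    simp only [Set.mem_setOf_eq] at *
    push_cast
    rw [map_add, ha, hb, add_zero]
  zero_mem' := by
    simp only [Set.mem_setOf_eq]
    push_cast
    rw [map_zero]
  smul_mem' := by
    intro c x hx
    simp only [Set.mem_setOf_eq, smul_eq_mul] at *
    push_cast
    rw [map_mul, hx, mul_zero]

/-- `b(ω_H) = {r ∈ R : r·x ∈ R for every x ∈ k((t)) with x·ω_Hⁿ ⊆ ω_Hⁿ for some n}`,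
a subset of `R = k[[H]]`, computed inside the Laurent series field `k((t))`. -/
noncomputable def bCanonicalSet (k : Type*) [Field k] (H : AddSubmonoid ℕ) :
    Set ↥(semigroupAlgebra k H) :=
  {r | ∀ x : LaurentSeries k,
      (∃ n : ℕ, ∀ y ∈ canonicalModule k H ^ n,
          x * HahnSeries.ofPowerSeries ℤ k y ∈
            (HahnSeries.ofPowerSeries ℤ k) ''
              ((canonicalModule k H ^ n : Submodule ↥(semigroupAlgebra k H)
                (PowerSeries k)) : Set (PowerSeries k))) →
      HahnSeries.ofPowerSeries ℤ k (r : PowerSeries k) * x ∈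
        (HahnSeries.ofPowerSeries ℤ k) '' (semigroupAlgebra k H : Set (PowerSeries k))}


section Aux

open PowerSeries

variable {k : Type*} [Field k] {n : ℕ}

lemma mem_nSemigroup' (n i : ℕ) : i ∈ nSemigroup n ↔ i = 0 ∨ n ≤ i := Iff.rfl

lemma not_mem_nSemigroup' (n i : ℕ) : i ∉ nSemigroup n ↔ i ≠ 0 ∧ i < n := by
  rw [mem_nSemigroup']; omega

lemma frob_n (hn : 3 ≤ n) : frobeniusNumber (nSemigroup n) = n - 1 := by
  have hset : {x : ℕ | x ∉ nSemigroup n} = {x | x ≠ 0 ∧ x < n} := by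
    ext x; exact not_mem_nSemigroup' n x
  rw [frobeniusNumber, hset]
  apply le_antisymm
  · exact csSup_le ⟨1, by constructor <;> omega⟩
      (fun x hx => by obtain ⟨h1, h2⟩ := hx; omega)
  · exact le_csSup ⟨n, fun x hx => by obtain ⟨h1, h2⟩ := hx; omega⟩
      (by constructor <;> omega)

lemma QF_n (hn : 3 ≤ n) : QF (nSemigroup n) = {x | x ≠ 0 ∧ x < n} := by
  ext x
  constructor
  · intro ⟨h1, _⟩; exact (not_mem_nSemigroup' n x).mp h1
  · intro hx
    refine ⟨(not_mem_nSemigroup' n x).mpr hx, fun h hh hne => ?_⟩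
    rw [mem_nSemigroup'] at hh ⊢
    omega

/-- Membership in `k[[H]]` for `H = nSemigroup n`. -/
lemma mem_R_iff {g : PowerSeries k} :
    g ∈ semigroupAlgebra k (nSemigroup n) ↔ ∀ i, i ≠ 0 → i < n → coeff i g = 0 := by
  constructor
  · intro hg i h1 h2
    exact hg i ((not_mem_nSemigroup' n i).mpr ⟨h1, h2⟩)
  · intro hg i hi
    obtain ⟨h1, h2⟩ := (not_mem_nSemigroup' n i).mp hi
    exact hg i h1 h2

/-- Elements of `R` with zero constant coefficient vanish in all degrees `< n`. -/
lemma low_coeff_eq_zero {r : PowerSeries k}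
    (hr : r ∈ semigroupAlgebra k (nSemigroup n)) (h0 : coeff 0 r = 0) :
    ∀ i < n, coeff i r = 0 := by
  intro i hi
  rcases Nat.eq_zero_or_pos i with h | h
  · rwa [h]
  · exact mem_R_iff.mp hr i (by omega) hi

/-- If all coefficients of `r` in degrees `< n` vanish, then so do those of `r * g`. -/
lemma low_coeff_mul {r : PowerSeries k} (hr : ∀ i < n, coeff i r = 0)
    (g : PowerSeries k) : ∀ i < n, coeff i (r * g) = 0 := by
  intro i hi
  rw [PowerSeries.coeff_mul]
  refine Finset.sum_eq_zero ?_
  rintro ⟨p, q⟩ hpq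
  rw [Finset.HasAntidiagonal.mem_antidiagonal] at hpq
  rw [hr p (by omega), zero_mul]

/-- The conductor property: `r ∈ 𝔪_R` multiplies all of `k[[t]]` into `R`. -/
lemma conductor_mem {r : PowerSeries k}
    (hr : r ∈ semigroupAlgebra k (nSemigroup n)) (h0 : coeff 0 r = 0)
    (g : PowerSeries k) : r * g ∈ semigroupAlgebra k (nSemigroup n) := by
  rw [mem_R_iff]
  intro i _ hi
  exact low_coeff_mul (low_coeff_eq_zero hr h0) g i hi

lemma smul_coe (r : ↥(semigroupAlgebra k (nSemigroup n))) (g : PowerSeries k) :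
    r • g = (r : PowerSeries k) * g := rfl

/-- Characterization of the canonical module. -/
lemma mem_omega_iff (hn : 3 ≤ n) {g : PowerSeries k} :
    g ∈ canonicalModule k (nSemigroup n) ↔ coeff (n - 1) g = 0 := by
  constructor
  · intro hg
    -- span is contained in the submodule {g | coeff (n-1) g = 0}
    have : canonicalModule k (nSemigroup n) ≤
        { carrier := {g : PowerSeries k | coeff (n - 1) g = 0}
          add_mem' := by
            intro a b ha hb
            simp only [Set.mem_setOf_eq] at *
            rw [map_add, ha, hb, add_zero]
          zero_mem' := by simp
          smul_mem' := by
            intro c x hx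
            simp only [Set.mem_setOf_eq] at *
            rw [smul_coe, PowerSeries.coeff_mul]
            refine Finset.sum_eq_zero ?_
            rintro ⟨p, q⟩ hpq
            rw [Finset.HasAntidiagonal.mem_antidiagonal] at hpq
            rcases Nat.eq_zero_or_pos p with h | h
            · have : q = n - 1 := by omega
              rw [this, hx, mul_zero]
            · rw [mem_R_iff.mp c.2 p (by omega) (by omega), zero_mul] } := by
      rw [canonicalModule]
      apply Submodule.span_le.mpr
      rintro _ ⟨x, hx, rfl⟩
      rw [QF_n hn] at hx
      obtain ⟨hx1, hx2⟩ := hx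
      show coeff (n - 1) (X ^ (frobeniusNumber (nSemigroup n) - x)) = 0
      rw [frob_n hn, PowerSeries.coeff_X_pow, if_neg (by omega)]
    exact this hg
  · intro hg
    -- decompose g
    classical
    set s : PowerSeries k := ∑ j ∈ Finset.range (n - 1), C (coeff j g) * X ^ j with hs
    have hXpow : ∀ j, j ≤ n - 2 → (X : PowerSeries k) ^ j ∈ canonicalModule k (nSemigroup n) := by
      intro j hj
      apply Submodule.subset_span
      refine ⟨n - 1 - j, ?_, ?_⟩
      · rw [QF_n hn]; constructor <;> omega
      · have hx : frobeniusNumber (nSemigroup n) - (n - 1 - j) = j := by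
          rw [frob_n hn]; omega
        simp only [hx]
    have hsmem : s ∈ canonicalModule k (nSemigroup n) := by
      apply Submodule.sum_mem
      intro j hj
      rw [Finset.mem_range] at hj
      have hC : (C (coeff j g)) ∈ semigroupAlgebra k (nSemigroup n) := by
        rw [mem_R_iff]
        intro i h1 h2
        rw [PowerSeries.coeff_C, if_neg h1]
      have := Submodule.smul_mem (canonicalModule k (nSemigroup n))
        (⟨_, hC⟩ : ↥(semigroupAlgebra k (nSemigroup n))) (hXpow j (by omega))
      rwa [smul_coe] at this
    have htail : g - s ∈ canonicalModule k (nSemigroup n) := by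
      have hmem : g - s ∈ semigroupAlgebra k (nSemigroup n) := by
        rw [mem_R_iff]
        intro i h1 h2
        rw [map_sub, hs]
        rw [map_sum]
        rcases Nat.lt_or_ge i (n - 1) with h | h
        · rw [Finset.sum_eq_single i]
          · rw [PowerSeries.coeff_C_mul_X_pow, if_pos rfl, sub_self]
          · intro j _ hj
            rw [PowerSeries.coeff_C_mul_X_pow, if_neg (Ne.symm hj)]
          · intro hi; exact absurd (Finset.mem_range.mpr h) hi
        · have hi : i = n - 1 := by omega
          rw [Finset.sum_eq_zero, hi, hg, sub_zero]
          intro j hj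
          rw [Finset.mem_range] at hj
          rw [PowerSeries.coeff_C_mul_X_pow, if_neg (by omega)]
      have h1 : (1 : PowerSeries k) ∈ canonicalModule k (nSemigroup n) := by
        have := hXpow 0 (by omega)
        rwa [pow_zero] at this
      have := Submodule.smul_mem (canonicalModule k (nSemigroup n))
        (⟨_, hmem⟩ : ↥(semigroupAlgebra k (nSemigroup n))) h1
      rwa [smul_coe, mul_one] at this
    have := Submodule.add_mem _ hsmem htail
    rwa [add_sub_cancel] at this

end Aux


section Aux2

open PowerSeries

variable {k : Type*} [Field k] {n : ℕ}

lemma mem_maxIdeal_iff {H : AddSubmonoid ℕ} {r : ↥(semigroupAlgebra k H)} :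
    r ∈ maximalIdealOf k H ↔ coeff 0 (r : PowerSeries k) = 0 := by
  rw [PowerSeries.coeff_zero_eq_constantCoeff_apply]
  exact Iff.rfl

/-- Part (i): the conductor equals the maximal ideal. -/
lemma part1 (hn : 3 ≤ n) :
    {r : ↥(semigroupAlgebra k (nSemigroup n)) |
        ∀ g : PowerSeries k, (r : PowerSeries k) * g ∈ semigroupAlgebra k (nSemigroup n)}
      = (maximalIdealOf k (nSemigroup n) : Set ↥(semigroupAlgebra k (nSemigroup n))) := by
  ext r
  constructor
  · intro hr
    have h1 := mem_R_iff.mp (hr X) 1 one_ne_zero (by omega)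
    rw [SetLike.mem_coe, mem_maxIdeal_iff, ← PowerSeries.coeff_succ_mul_X]
    exact h1
  · intro hr g
    rw [SetLike.mem_coe, mem_maxIdeal_iff] at hr
    exact conductor_mem r.2 hr g

/-- Multiplication by `X ^ m` (for `m ≥ n`) as a linear map `ω → R`. -/
noncomputable def multMap (k : Type*) [Field k] (n m : ℕ) (hm : n ≤ m) :
    ↥(canonicalModule k (nSemigroup n)) →ₗ[↥(semigroupAlgebra k (nSemigroup n))]
      ↥(semigroupAlgebra k (nSemigroup n)) where
  toFun x := ⟨X ^ m * (x : PowerSeries k), by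
    rw [mem_R_iff]
    intro i h1 h2
    rw [PowerSeries.coeff_X_pow_mul', if_neg (by omega)]⟩
  map_add' x y := Subtype.ext (mul_add _ _ _)
  map_smul' r x := Subtype.ext (mul_left_comm _ _ _)

lemma one_mem_omega (hn : 3 ≤ n) : (1 : PowerSeries k) ∈ canonicalModule k (nSemigroup n) := by
  rw [mem_omega_iff hn, PowerSeries.coeff_one, if_neg (by omega)]

lemma X_mem_omega (hn : 3 ≤ n) : (X : PowerSeries k) ∈ canonicalModule k (nSemigroup n) := by
  rw [mem_omega_iff hn, PowerSeries.coeff_X, if_neg (by omega)]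

lemma range_le (hn : 3 ≤ n)
    (f : ↥(canonicalModule k (nSemigroup n)) →ₗ[↥(semigroupAlgebra k (nSemigroup n))]
      ↥(semigroupAlgebra k (nSemigroup n))) :
    LinearMap.range f ≤ maximalIdealOf k (nSemigroup n) := by
  have hXn : ∀ x : ↥(canonicalModule k (nSemigroup n)),
      (X : PowerSeries k) ^ n * (x : PowerSeries k) ∈ semigroupAlgebra k (nSemigroup n) := by
    intro x
    rw [mem_R_iff]
    intro i h1 h2
    rw [PowerSeries.coeff_X_pow_mul', if_neg (by omega)]
  have key : ∀ x y : ↥(canonicalModule k (nSemigroup n)),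
      (x : PowerSeries k) * ((f y : ↥(semigroupAlgebra k (nSemigroup n))) : PowerSeries k)
        = (y : PowerSeries k) * ((f x : _) : PowerSeries k) := by
    intro x y
    have e : (⟨X ^ n * (x : PowerSeries k), hXn x⟩ :
          ↥(semigroupAlgebra k (nSemigroup n))) • y
        = (⟨X ^ n * (y : PowerSeries k), hXn y⟩ : ↥(semigroupAlgebra k (nSemigroup n))) • x := by
      apply Subtype.ext
      show X ^ n * (x : PowerSeries k) * (y : PowerSeries k)
        = X ^ n * (y : PowerSeries k) * (x : PowerSeries k)
      ring
    have e2 := congrArg f e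
    rw [map_smul, map_smul] at e2
    have e3 := congrArg (Subtype.val) e2
    have e4 : X ^ n * ((x : PowerSeries k) * ((f y : _) : PowerSeries k))
        = X ^ n * ((y : PowerSeries k) * ((f x : _) : PowerSeries k)) := by
      have : (X ^ n * (x : PowerSeries k)) * ((f y : _) : PowerSeries k)
          = (X ^ n * (y : PowerSeries k)) * ((f x : _) : PowerSeries k) := e3
      rw [mul_assoc, mul_assoc] at this
      exact this
    exact mul_left_cancel₀ (pow_ne_zero n PowerSeries.X_ne_zero) e4
  set e1 : ↥(canonicalModule k (nSemigroup n)) := ⟨1, one_mem_omega hn⟩ with he1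
  set eX : ↥(canonicalModule k (nSemigroup n)) := ⟨X, X_mem_omega hn⟩ with heX
  have hkey1 : ∀ x : ↥(canonicalModule k (nSemigroup n)),
      ((f x : _) : PowerSeries k) = (x : PowerSeries k) * ((f e1 : _) : PowerSeries k) := by
    intro x
    have := key x e1
    rw [he1] at this
    simpa using this.symm
  have h0 : coeff 0 ((f e1 : _) : PowerSeries k) = 0 := by
    have hX := hkey1 eX
    have hmem := (f eX).2
    rw [mem_R_iff] at hmem
    have h1 := hmem 1 one_ne_zero (by omega)
    rw [hX, heX] at h1
    rw [← PowerSeries.coeff_succ_mul_X]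
    rw [mul_comm] at h1
    exact h1
  rintro _ ⟨x, rfl⟩
  rw [mem_maxIdeal_iff, hkey1 x, PowerSeries.coeff_mul,
    Finset.Nat.antidiagonal_zero]
  simp [h0]

lemma part2 (hn : 3 ≤ n) :
    traceIdeal ↥(semigroupAlgebra k (nSemigroup n)) ↥(canonicalModule k (nSemigroup n))
      = maximalIdealOf k (nSemigroup n) := by
  apply le_antisymm
  · exact iSup_le (range_le hn)
  · intro r hr
    rw [mem_maxIdeal_iff] at hr
    set x1 : PowerSeries k :=
      PowerSeries.mk fun i => if i = n - 1 then 0 else coeff (i + n) (r : PowerSeries k)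
      with hx1def
    set x2 : PowerSeries k :=
      PowerSeries.mk fun i => if i = n - 2 then coeff (2 * n - 1) (r : PowerSeries k) else 0
      with hx2def
    have hx1 : x1 ∈ canonicalModule k (nSemigroup n) := by
      rw [mem_omega_iff hn, hx1def, PowerSeries.coeff_mk, if_pos rfl]
    have hx2 : x2 ∈ canonicalModule k (nSemigroup n) := by
      rw [mem_omega_iff hn, hx2def, PowerSeries.coeff_mk, if_neg (by omega)]
    have hdecomp : (r : PowerSeries k) = X ^ n * x1 + X ^ (n + 1) * x2 := by
      ext i
      rw [map_add, PowerSeries.coeff_X_pow_mul', PowerSeries.coeff_X_pow_mul',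
        hx1def, hx2def, PowerSeries.coeff_mk, PowerSeries.coeff_mk]
      rcases lt_or_ge i n with h | h
      · rw [if_neg (by omega), if_neg (by omega), add_zero]
        exact low_coeff_eq_zero r.2 hr i h
      · by_cases h2 : i = 2 * n - 1
        · rw [if_pos (by omega), if_pos (by omega), if_pos (by omega), if_pos (by omega),
            zero_add, h2]
        · rw [if_pos h, if_neg (by omega)]
          have h4 : i - n + n = i := by omega
          rw [h4]
          by_cases h3 : n + 1 ≤ i
          · rw [if_pos h3, if_neg (by omega), add_zero]
          · rw [if_neg h3, add_zero]
    have hr1 : r = multMap k n n le_rfl ⟨x1, hx1⟩ + multMap k n (n + 1) (by omega) ⟨x2, hx2⟩ :=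
      Subtype.ext hdecomp
    rw [hr1]
    refine Submodule.add_mem _ ?_ ?_
    · exact le_iSup (fun f => LinearMap.range f) (multMap k n n le_rfl) ⟨⟨x1, hx1⟩, rfl⟩
    · exact le_iSup (fun f => LinearMap.range f) (multMap k n (n + 1) (by omega))
        ⟨⟨x2, hx2⟩, rfl⟩

end Aux2


section Aux3

open PowerSeries

variable {k : Type*} [Field k] {n : ℕ}

lemma mem_omega_sq (hn : 3 ≤ n) (g : PowerSeries k) :
    g ∈ canonicalModule k (nSemigroup n) ^ 2 := by
  have h1 : (1 : PowerSeries k) ∈ canonicalModule k (nSemigroup n) := one_mem_omega hn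
  have hXpow : ∀ j, j ≤ n - 2 → (X : PowerSeries k) ^ j ∈ canonicalModule k (nSemigroup n) := by
    intro j hj
    rw [mem_omega_iff hn, PowerSeries.coeff_X_pow, if_neg (by omega)]
  have hgen : ∀ j, j ≤ n - 1 →
      (X : PowerSeries k) ^ j ∈ canonicalModule k (nSemigroup n) ^ 2 := by
    intro j hj
    rw [pow_two]
    rcases le_or_gt j (n - 2) with h | h
    · have := Submodule.mul_mem_mul (hXpow j h) h1
      rwa [mul_one] at this
    · have := Submodule.mul_mem_mul (hXpow (n - 2) le_rfl) (hXpow 1 (by omega))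
      rwa [← pow_add, (by omega : n - 2 + 1 = j)] at this
  set s : PowerSeries k := ∑ j ∈ Finset.range n, C (coeff j g) * X ^ j with hs
  have hsmem : s ∈ canonicalModule k (nSemigroup n) ^ 2 := by
    apply Submodule.sum_mem
    intro j hj
    rw [Finset.mem_range] at hj
    have hC : (C (coeff j g)) ∈ semigroupAlgebra k (nSemigroup n) := by
      rw [mem_R_iff]; intro i hi _; rw [PowerSeries.coeff_C, if_neg hi]
    have := Submodule.smul_mem (canonicalModule k (nSemigroup n) ^ 2)
      (⟨_, hC⟩ : ↥(semigroupAlgebra k (nSemigroup n))) (hgen j (by omega))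
    rwa [smul_coe] at this
  have h1sq : (1 : PowerSeries k) ∈ canonicalModule k (nSemigroup n) ^ 2 := by
    have := hgen 0 (by omega); rwa [pow_zero] at this
  have htail : g - s ∈ canonicalModule k (nSemigroup n) ^ 2 := by
    have hmem : g - s ∈ semigroupAlgebra k (nSemigroup n) := by
      rw [mem_R_iff]
      intro i hne hlt
      rw [map_sub, hs, map_sum, Finset.sum_eq_single i]
      · rw [PowerSeries.coeff_C_mul_X_pow, if_pos rfl, sub_self]
      · intro j _ hj; rw [PowerSeries.coeff_C_mul_X_pow, if_neg (Ne.symm hj)]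
      · intro hi; exact absurd (Finset.mem_range.mpr hlt) hi
    have := Submodule.smul_mem (canonicalModule k (nSemigroup n) ^ 2)
      (⟨_, hmem⟩ : ↥(semigroupAlgebra k (nSemigroup n))) h1sq
    rwa [smul_coe, mul_one] at this
  have := Submodule.add_mem _ hsmem htail
  rwa [add_sub_cancel] at this

lemma one_mem_omega_pow (hn : 3 ≤ n) (m : ℕ) :
    (1 : PowerSeries k) ∈ canonicalModule k (nSemigroup n) ^ m := by
  induction m with
  | zero =>
    have h0 : canonicalModule k (nSemigroup n) ^ (0 : ℕ) = 1 := Submodule.pow_zero _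
    rw [h0]
    exact Submodule.one_le.mp le_rfl
  | succ m ih =>
    have h0 : canonicalModule k (nSemigroup n) ^ (m + 1)
        = canonicalModule k (nSemigroup n) ^ m * canonicalModule k (nSemigroup n) := Submodule.pow_succ _
    rw [h0]
    have := Submodule.mul_mem_mul ih (one_mem_omega hn)
    rwa [mul_one] at this

lemma part3 (hn : 3 ≤ n) :
    bCanonicalSet k (nSemigroup n)
      = (maximalIdealOf k (nSemigroup n) : Set ↥(semigroupAlgebra k (nSemigroup n))) := by
  ext r
  constructor
  · intro hr
    have hstab : ∃ m : ℕ, ∀ y ∈ canonicalModule k (nSemigroup n) ^ m,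
        (HahnSeries.ofPowerSeries ℤ k X) * HahnSeries.ofPowerSeries ℤ k y ∈
          (HahnSeries.ofPowerSeries ℤ k) ''
            ((canonicalModule k (nSemigroup n) ^ m :
              Submodule ↥(semigroupAlgebra k (nSemigroup n)) (PowerSeries k)) :
                Set (PowerSeries k)) :=
      ⟨2, fun y _ => ⟨X * y, mem_omega_sq hn _, map_mul _ _ _⟩⟩
    obtain ⟨s, hs, hseq⟩ := hr (HahnSeries.ofPowerSeries ℤ k X) hstab
    have heq : s = (r : PowerSeries k) * X :=
      HahnSeries.ofPowerSeries_injective (by rw [hseq, map_mul])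
    have hs' : (r : PowerSeries k) * X ∈ semigroupAlgebra k (nSemigroup n) := heq ▸ hs
    rw [SetLike.mem_coe, mem_maxIdeal_iff, ← PowerSeries.coeff_succ_mul_X]
    exact mem_R_iff.mp hs' 1 one_ne_zero (by omega)
  · rintro hr x ⟨m, hx⟩
    rw [SetLike.mem_coe, mem_maxIdeal_iff] at hr
    obtain ⟨p, hp, hpeq⟩ := hx 1 (one_mem_omega_pow hn m)
    have hx' : x = HahnSeries.ofPowerSeries ℤ k p := by
      rw [hpeq, map_one, mul_one]
    exact ⟨(r : PowerSeries k) * p, conductor_mem r.2 hr p, by rw [map_mul, hx']⟩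

end Aux3

/-- Let `n ≥ 3`, `H = {0} ∪ {m : m ≥ n}`, and `R = k[[H]]` with maximal
ideal `𝔪_R`. Then (i) the conductor `{r ∈ R : r·k[[t]] ⊆ R}` equals `𝔪_R`;
(ii) `tr(ω_H) = 𝔪_R`; and (iii) `b(ω_H) = 𝔪_R`. -/
theorem stmt15 (k : Type*) [Field k] (n : ℕ) (hn : 3 ≤ n) :
    {r : ↥(semigroupAlgebra k (nSemigroup n)) |
        ∀ g : PowerSeries k, (r : PowerSeries k) * g ∈ semigroupAlgebra k (nSemigroup n)}
      = (maximalIdealOf k (nSemigroup n) : Set ↥(semigroupAlgebra k (nSemigroup n)))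
    ∧ traceIdeal ↥(semigroupAlgebra k (nSemigroup n)) ↥(canonicalModule k (nSemigroup n))
        = maximalIdealOf k (nSemigroup n)
    ∧ bCanonicalSet k (nSemigroup n)
      = (maximalIdealOf k (nSemigroup n) : Set ↥(semigroupAlgebra k (nSemigroup n))) :=
  ⟨part1 hn, part2 hn, part3 hn⟩
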